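/- For every x ∈ ℝ³, the integral ∫_{ℝ³} ( e^{−‖x−y‖} / (4π‖x−y‖) ) · ( e^{−‖y‖} / ‖y‖ ) dy converges absolutely and 2 ∫_{ℝ³} ( e^{−‖x−y‖} / (4π‖x−y‖) ) · ( e^{−‖y‖} / ‖y‖ ) dy = e^{−‖x‖}. -/

import Mathlib

open Real MeasureTheory

section HydrogenAuxSection

open Set

namespace HydrogenAux

theorem lintegral_image_eq_lintegral_abs_deriv_mul' {s : Set ℝ} {f f' : ℝ → ℝ}
    (hs : MeasurableSet s) (hf' : ∀ x ∈ s, HasDerivWithinAt f (f' x) s x)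
    (hf : Set.InjOn f s) (g : ℝ → ENNReal) :
    ∫⁻ x in f '' s, g x = ∫⁻ x in s, ENNReal.ofReal |f' x| * g (f x) := by
  simpa only [ContinuousLinearMap.det_toSpanSingleton] using
    lintegral_image_eq_lintegral_abs_det_fderiv_mul volume hs
      (fun x hx => (hf' x hx).hasFDerivWithinAt) hf g

theorem lintegral_comp_polarCoord_symm' (f : ℝ × ℝ → ENNReal) :
    ∫⁻ p in polarCoord.target, ENNReal.ofReal p.1 * f (polarCoord.symm p) = ∫⁻ p, f p := by
  set B : ℝ × ℝ → ℝ × ℝ →L[ℝ] ℝ × ℝ := fun p =>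
    LinearMap.toContinuousLinearMap (Matrix.toLin (Module.Basis.finTwoProd ℝ) (Module.Basis.finTwoProd ℝ)
      !![Real.cos p.2, -p.1 * Real.sin p.2; Real.sin p.2, p.1 * Real.cos p.2])
  have B_det : ∀ p, (B p).det = p.1 := by
    intro p
    conv_rhs => rw [← one_mul p.1, ← cos_sq_add_sin_sq p.2]
    simp only [B, neg_mul, LinearMap.det_toContinuousLinearMap, LinearMap.det_toLin,
      Matrix.det_fin_two_of, sub_neg_eq_add]
    ring
  symm
  calc ∫⁻ p, f p = ∫⁻ p in polarCoord.source, f p := by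
        rw [← setLIntegral_univ]
        exact (setLIntegral_congr polarCoord_source_ae_eq_univ.symm)
    _ = ∫⁻ p in polarCoord.symm '' polarCoord.target, f p := by
        rw [polarCoord.symm_image_target_eq_source]
    _ = ∫⁻ p in polarCoord.target, ENNReal.ofReal |(B p).det| * f (polarCoord.symm p) :=
        lintegral_image_eq_lintegral_abs_det_fderiv_mul volume
          polarCoord.open_target.measurableSet
          (fun p _ => (hasFDerivAt_polarCoord_symm p).hasFDerivWithinAt)
          polarCoord.symm.injOn f
    _ = ∫⁻ p in polarCoord.target, ENNReal.ofReal p.1 * f (polarCoord.symm p) := by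
        refine setLIntegral_congr_fun polarCoord.open_target.measurableSet ?_
        intro p hp
        dsimp only
        rw [B_det p, abs_of_pos]
        exact hp.1

theorem lintegral_polar_fst (h : ℝ → ENNReal) (hh : Measurable h) :
    ∫⁻ p in polarCoord.target, h p.1 = ENNReal.ofReal (2 * π) * ∫⁻ t in Ioi (0:ℝ), h t := by
  rw [polarCoord_target, Measure.volume_eq_prod, ← Measure.prod_restrict,
    lintegral_prod (fun p => h p.1) (Measurable.aemeasurable (by exact hh.comp measurable_fst))]
  simp only [lintegral_const, Measure.restrict_apply MeasurableSet.univ, univ_inter,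
    Real.volume_Ioo]
  rw [show π - -π = 2 * π by ring]
  rw [lintegral_mul_const' _ _ (by simp [ENNReal.mul_eq_top]), mul_comm]

theorem key_subst (c u : ℝ) (hcu : 0 < |c| + |u|) :
    ∫⁻ t in Ioi (0:ℝ), ENNReal.ofReal (t * (Real.exp (-Real.sqrt (c^2 + t^2)) /
        (4 * π * Real.sqrt (c^2 + t^2)) *
        (Real.exp (-Real.sqrt (u^2 + t^2)) / Real.sqrt (u^2 + t^2)))) =
    ∫⁻ w in Ioi (|c| + |u|), ENNReal.ofReal (Real.exp (-w) / (4 * π * w)) := by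
  set A : ℝ → ℝ := fun t => Real.sqrt (c^2 + t^2) with hA
  set Bf : ℝ → ℝ := fun t => Real.sqrt (u^2 + t^2) with hB
  set φ : ℝ → ℝ := fun t => A t + Bf t with hφ
  set φ' : ℝ → ℝ := fun t => t / A t + t / Bf t with hφ'
  have hApos : ∀ t : ℝ, 0 < t → 0 < A t := fun t ht =>
    Real.sqrt_pos.mpr (by positivity)
  have hBpos : ∀ t : ℝ, 0 < t → 0 < Bf t := fun t ht =>
    Real.sqrt_pos.mpr (by positivity)
  have hA2 : ∀ t : ℝ, A t ^ 2 = c^2 + t^2 := fun t => Real.sq_sqrt (by positivity)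
  have hB2 : ∀ t : ℝ, Bf t ^ 2 = u^2 + t^2 := fun t => Real.sq_sqrt (by positivity)
  have hderiv : ∀ t ∈ Ioi (0:ℝ), HasDerivWithinAt φ (φ' t) (Ioi 0) t := by
    intro t ht
    have ht' : (0:ℝ) < t := ht
    have h1 : HasDerivAt (fun s : ℝ => c^2 + s^2) (2*t) t := by
      simpa using (HasDerivAt.const_add (c^2) (by simpa using hasDerivAt_pow 2 t))
    have h2 : HasDerivAt (fun s : ℝ => u^2 + s^2) (2*t) t := by
      simpa using (HasDerivAt.const_add (u^2) (by simpa using hasDerivAt_pow 2 t))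
    have hc2 : c^2 + t^2 ≠ 0 := by positivity
    have hu2 : u^2 + t^2 ≠ 0 := by positivity
    have hs1 : HasDerivAt A (1 / (2 * Real.sqrt (c^2+t^2)) * (2*t)) t :=
      (Real.hasDerivAt_sqrt hc2).comp t h1
    have hs2 : HasDerivAt Bf (1 / (2 * Real.sqrt (u^2+t^2)) * (2*t)) t :=
      (Real.hasDerivAt_sqrt hu2).comp t h2
    have := (hs1.add hs2).hasDerivWithinAt (s := Ioi (0:ℝ))
    refine HasDerivWithinAt.congr_deriv this (Eq.symm ?_)
    have h3 : Real.sqrt (c^2+t^2) ≠ 0 := (hApos t ht').ne'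
    have h4 : Real.sqrt (u^2+t^2) ≠ 0 := (hBpos t ht').ne'
    simp only [hφ', hA, hB]
    field_simp
  have hinj : InjOn φ (Ioi (0:ℝ)) := by
    intro t1 h1 t2 h2 heq
    have ht1 : (0:ℝ) < t1 := h1
    have ht2 : (0:ℝ) < t2 := h2
    have hw : 0 < A t2 + Bf t2 := by
      have := hApos t2 ht2; have := hBpos t2 ht2; linarith
    have heq' : A t1 + Bf t1 = A t2 + Bf t2 := heq
    have hd : (A t1 - Bf t1) * (A t2 + Bf t2) = (A t2 - Bf t2) * (A t2 + Bf t2) := by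
      rw [← heq']
      have e1 := hA2 t1; have e2 := hB2 t1; have e3 := hA2 t2; have e4 := hB2 t2
      nlinarith [e1, e2, e3, e4, heq']
    have hd' : A t1 - Bf t1 = A t2 - Bf t2 := mul_right_cancel₀ hw.ne' hd
    have hAeq : A t1 = A t2 := by linarith
    have ht2eq : t1^2 = t2^2 := by
      have e1 := hA2 t1; have e3 := hA2 t2
      rw [hAeq] at e1; linarith
    exact le_antisymm (by nlinarith) (by nlinarith)
  have himg : φ '' (Ioi (0:ℝ)) = Ioi (|c| + |u|) := by
    ext w
    constructor
    · rintro ⟨t, ht, rfl⟩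
      have ht' : (0:ℝ) < t := ht
      have hAge : |c| ≤ A t := by
        rw [← Real.sqrt_sq_eq_abs]
        exact Real.sqrt_le_sqrt (by nlinarith)
      have hBgt : |u| < Bf t := by
        rw [← Real.sqrt_sq_eq_abs]
        exact Real.sqrt_lt_sqrt (sq_nonneg u) (by nlinarith)
      exact mem_Ioi.mpr (by simp only [hφ]; linarith)
    · intro hwmem
      have hw : |c| + |u| < w := hwmem
      have hw0 : 0 < w := lt_of_le_of_lt (by positivity) hw
      have hφ0 : φ 0 = |c| + |u| := by
        simp [hφ, hA, hB, Real.sqrt_sq_eq_abs]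
      have hφw : w ≤ φ w := by
        have h1 : w ≤ Bf w := by
          have hww : w = Real.sqrt (w^2) := (Real.sqrt_sq hw0.le).symm
          nth_rewrite 1 [hww]
          exact Real.sqrt_le_sqrt (by nlinarith)
        have h2 : 0 ≤ A w := Real.sqrt_nonneg _
        simp only [hφ]; linarith
      have hcont : ContinuousOn φ (Icc 0 w) := by
        apply Continuous.continuousOn
        exact ((continuous_const.add (continuous_pow 2)).sqrt).add
          ((continuous_const.add (continuous_pow 2)).sqrt)
      have : w ∈ φ '' (Icc 0 w) := by
        apply intermediate_value_Icc hw0.le hcont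
        exact ⟨by rw [hφ0]; exact hw.le, hφw⟩
      obtain ⟨t, htIcc, htw⟩ := this
      refine ⟨t, ?_, htw⟩
      rcases eq_or_lt_of_le htIcc.1 with h | h
      · exfalso; rw [← h] at htw; rw [hφ0] at htw; exact absurd htw (ne_of_lt hw)
      · exact h
  rw [← himg, lintegral_image_eq_lintegral_abs_deriv_mul' measurableSet_Ioi hderiv hinj]
  refine setLIntegral_congr_fun measurableSet_Ioi ?_
  intro t ht
  dsimp only
  have ht' : (0:ℝ) < t := ht
  have ha := hApos t ht'
  have hb := hBpos t ht'
  have habs : |φ' t| = φ' t := abs_of_nonneg (by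
    have : 0 ≤ t / A t := by positivity
    have : 0 ≤ t / Bf t := by positivity
    simp only [hφ']; positivity)
  rw [habs, ← ENNReal.ofReal_mul (by simp only [hφ']; positivity)]
  congr 1
  have hexp : Real.exp (-(A t + Bf t)) = Real.exp (-A t) * Real.exp (-Bf t) := by
    rw [← Real.exp_add]; ring_nf
  simp only [hφ, hφ', hexp]
  have hab : 0 < A t + Bf t := by linarith
  field_simp
  ring

theorem volume_strip (r : ℝ) (hr : 0 ≤ r) (w : ℝ) :
    volume {u : ℝ | |r - u| + |u| < w} = if r < w then ENNReal.ofReal w else 0 := by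
  by_cases h : r < w
  · rw [if_pos h]
    have hset : {u : ℝ | |r - u| + |u| < w} = Ioo ((r-w)/2) ((r+w)/2) := by
      ext v; simp only [mem_setOf_eq, mem_Ioo]
      constructor
      · intro hv
        rcases abs_cases (r - v) with ⟨h1,_⟩|⟨h1,_⟩ <;> rcases abs_cases v with ⟨h2,_⟩|⟨h2,_⟩ <;>
          exact ⟨by linarith, by linarith⟩
      · rintro ⟨hv1, hv2⟩
        rcases abs_cases (r - v) with ⟨h1,_⟩|⟨h1,_⟩ <;> rcases abs_cases v with ⟨h2,_⟩|⟨h2,_⟩ <;>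
          linarith
    rw [hset, Real.volume_Ioo]
    congr 1; ring
  · rw [if_neg h]
    have hset : {u : ℝ | |r - u| + |u| < w} = (∅ : Set ℝ) := by
      ext v; simp only [mem_setOf_eq, mem_empty_iff_false, iff_false, not_lt]
      calc w ≤ r := le_of_not_gt h
        _ = |r| := (abs_of_nonneg hr).symm
        _ = |(r - v) + v| := by ring_nf
        _ ≤ |r - v| + |v| := abs_add_le _ _
    rw [hset, measure_empty]

theorem outer_integral (r : ℝ) (hr : 0 ≤ r) :
    ∫⁻ u : ℝ, ∫⁻ w in Ioi (|r - u| + |u|), ENNReal.ofReal (Real.exp (-w) / (4*π*w)) =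
    ENNReal.ofReal (Real.exp (-r) / (4*π)) := by
  set h : ℝ → ENNReal := fun w => ENNReal.ofReal (Real.exp (-w) / (4*π*w)) with hh
  have hmeas : Measurable h := by fun_prop
  have hw₀cont : Continuous (fun u : ℝ => |r - u| + |u|) := by fun_prop
  have step1 : ∀ u : ℝ, (∫⁻ w in Ioi (|r-u|+|u|), h w) = ∫⁻ w, (Ioi (|r-u|+|u|)).indicator h w :=
    fun u => (lintegral_indicator measurableSet_Ioi h).symm
  calc ∫⁻ u : ℝ, ∫⁻ w in Ioi (|r - u| + |u|), h w
      = ∫⁻ u : ℝ, ∫⁻ w, (Ioi (|r-u|+|u|)).indicator h w := by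
        exact lintegral_congr step1
    _ = ∫⁻ w : ℝ, ∫⁻ u, (Ioi (|r-u|+|u|)).indicator h w := by
        apply lintegral_lintegral_swap
        have hS : MeasurableSet {p : ℝ × ℝ | |r - p.1| + |p.1| < p.2} :=
          measurableSet_lt (hw₀cont.comp continuous_fst).measurable measurable_snd
        have : (Function.uncurry fun u w => (Ioi (|r-u|+|u|)).indicator h w) =
            {p : ℝ × ℝ | |r - p.1| + |p.1| < p.2}.indicator (fun p => h p.2) := by
          ext p
          simp only [Function.uncurry, indicator_apply, mem_Ioi, mem_setOf_eq]
        rw [this]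
        exact ((hmeas.comp measurable_snd).indicator hS).aemeasurable
    _ = ∫⁻ w : ℝ, h w * (if r < w then ENNReal.ofReal w else 0) := by
        apply lintegral_congr
        intro w
        have : (fun u => (Ioi (|r-u|+|u|)).indicator h w) =
            (fun u => {u : ℝ | |r - u| + |u| < w}.indicator (fun _ => h w) u) := by
          ext u
          simp only [indicator_apply, mem_Ioi, mem_setOf_eq]
        rw [this, lintegral_indicator_const, volume_strip r hr w]
        exact measurableSet_lt (by fun_prop) measurable_const
    _ = ∫⁻ w : ℝ in Ioi r, h w * ENNReal.ofReal w := by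
        rw [← lintegral_indicator measurableSet_Ioi]
        apply lintegral_congr
        intro w
        simp only [indicator_apply, mem_Ioi]
        by_cases hrw : r < w
        · simp [hrw]
        · simp [hrw]
    _ = ∫⁻ w : ℝ in Ioi r, ENNReal.ofReal (Real.exp (-w) / (4*π)) := by
        refine setLIntegral_congr_fun measurableSet_Ioi ?_
        intro w hw
        dsimp only
        have hw0 : 0 < w := lt_of_le_of_lt hr hw
        rw [hh, ← ENNReal.ofReal_mul (by positivity)]
        congr 1
        field_simp
    _ = ENNReal.ofReal (Real.exp (-r) / (4*π)) := by
        rw [← ofReal_integral_eq_lintegral_ofReal]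
        · rw [integral_div, integral_exp_neg_Ioi]
        · have := (exp_neg_integrableOn_Ioi r (zero_lt_one)).div_const (4*π)
          simpa using this
        · filter_upwards with w
          positivity

noncomputable def Φ (p : ℝ × ℝ × ℝ) : EuclideanSpace ℝ (Fin 3) :=
  (MeasurableEquiv.toLp 2 (Fin 3 → ℝ))
    ((MeasurableEquiv.piFinSuccAbove (fun _ : Fin 3 => ℝ) 0).symm
      (p.1, (MeasurableEquiv.finTwoArrow (α := ℝ)).symm (p.2.1, p.2.2)))

theorem measurePreserving_Φ : MeasurePreserving Φ := by
  have h1 : MeasurePreserving (fun p : ℝ × ℝ × ℝ =>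
      (p.1, (MeasurableEquiv.finTwoArrow (α := ℝ)).symm (p.2.1, p.2.2))) :=
    (MeasurePreserving.id volume).prod (volume_preserving_finTwoArrow ℝ).symm
  exact (((EuclideanSpace.volume_preserving_symm_measurableEquiv_toLp (Fin 3)).symm).comp
    ((volume_preserving_piFinSuccAbove (fun _ : Fin 3 => ℝ) 0).symm)).comp h1

theorem Φ_apply (p : ℝ × ℝ × ℝ) : ∀ i, Φ p i = ![p.1, p.2.1, p.2.2] i := by
  intro i
  fin_cases i <;>
    simp [Φ, MeasurableEquiv.piFinSuccAbove, MeasurableEquiv.toLp,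
      MeasurableEquiv.finTwoArrow, Fin.insertNth]
  all_goals rfl

theorem norm_sub_Φ (q : EuclideanSpace ℝ (Fin 3)) (p : ℝ × ℝ × ℝ) :
    ‖q - Φ p‖ = Real.sqrt ((q 0 - p.1)^2 + ((q 1 - p.2.1)^2 + (q 2 - p.2.2)^2)) := by
  rw [EuclideanSpace.norm_eq]
  congr 1
  rw [Fin.sum_univ_three]
  have h0 := Φ_apply p 0
  have h1 := Φ_apply p 1
  have h2 := Φ_apply p 2
  simp only [Matrix.cons_val_zero, Matrix.cons_val_one, Matrix.head_cons,
    Matrix.cons_val_two, Matrix.tail_cons] at h0 h1 h2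
  simp only [PiLp.sub_apply, Real.norm_eq_abs, sq_abs, h0, h1, h2]
  ring

theorem norm_Φ (p : ℝ × ℝ × ℝ) :
    ‖Φ p‖ = Real.sqrt (p.1^2 + (p.2.1^2 + p.2.2^2)) := by
  rw [EuclideanSpace.norm_eq]
  congr 1
  rw [Fin.sum_univ_three]
  have h0 := Φ_apply p 0
  have h1 := Φ_apply p 1
  have h2 := Φ_apply p 2
  simp only [Matrix.cons_val_zero, Matrix.cons_val_one, Matrix.head_cons,
    Matrix.cons_val_two, Matrix.tail_cons] at h0 h1 h2
  simp only [Real.norm_eq_abs, sq_abs, h0, h1, h2]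
  ring

theorem exists_isometry (a b : EuclideanSpace ℝ (Fin 3)) (hab : ‖a‖ = ‖b‖) :
    ∃ e : EuclideanSpace ℝ (Fin 3) ≃ₗᵢ[ℝ] EuclideanSpace ℝ (Fin 3), e a = b := by
  rcases eq_or_ne a b with rfl | hne
  · exact ⟨LinearIsometryEquiv.refl ℝ _, rfl⟩
  · exact ⟨Submodule.reflection (ℝ ∙ (a - b))ᗮ, Submodule.reflection_sub hab⟩


theorem plane_integral (c u : ℝ) :
    ∫⁻ q : ℝ × ℝ, ENNReal.ofReal (Real.exp (-Real.sqrt (c^2 + (q.1^2 + q.2^2))) /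
        (4 * π * Real.sqrt (c^2 + (q.1^2 + q.2^2))) *
        (Real.exp (-Real.sqrt (u^2 + (q.1^2 + q.2^2))) / Real.sqrt (u^2 + (q.1^2 + q.2^2)))) =
    ENNReal.ofReal (2 * π) * ∫⁻ t in Ioi (0:ℝ), ENNReal.ofReal (t *
        (Real.exp (-Real.sqrt (c^2 + t^2)) / (4 * π * Real.sqrt (c^2 + t^2)) *
        (Real.exp (-Real.sqrt (u^2 + t^2)) / Real.sqrt (u^2 + t^2)))) := by
  set Ψ : ℝ → ℝ := fun s => Real.exp (-Real.sqrt (c^2 + s)) / (4 * π * Real.sqrt (c^2 + s)) *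
    (Real.exp (-Real.sqrt (u^2 + s)) / Real.sqrt (u^2 + s)) with hΨ
  have hΨmeas : Measurable Ψ := by fun_prop
  have key := lintegral_comp_polarCoord_symm' (fun q : ℝ × ℝ => ENNReal.ofReal (Ψ (q.1^2 + q.2^2)))
  have hfst := lintegral_polar_fst (fun t => ENNReal.ofReal t * ENNReal.ofReal (Ψ (t^2)))
    (by fun_prop)
  calc ∫⁻ q : ℝ × ℝ, ENNReal.ofReal (Ψ (q.1^2 + q.2^2))
      = ∫⁻ p in polarCoord.target, ENNReal.ofReal p.1 *
          ENNReal.ofReal (Ψ (((polarCoord.symm p).1)^2 + ((polarCoord.symm p).2)^2)) := key.symm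
    _ = ∫⁻ p in polarCoord.target, ENNReal.ofReal p.1 * ENNReal.ofReal (Ψ (p.1^2)) := by
        refine setLIntegral_congr_fun polarCoord.open_target.measurableSet ?_
        intro p hp
        congr 2
        simp only [polarCoord_symm_apply]
        rw [mul_pow, mul_pow, ← mul_add, Real.cos_sq_add_sin_sq, mul_one]
    _ = ENNReal.ofReal (2 * π) * ∫⁻ t in Ioi (0:ℝ),
          ENNReal.ofReal t * ENNReal.ofReal (Ψ (t^2)) := hfst
    _ = ENNReal.ofReal (2 * π) * ∫⁻ t in Ioi (0:ℝ), ENNReal.ofReal (t * Ψ (t^2)) := by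
        congr 1
        refine setLIntegral_congr_fun measurableSet_Ioi ?_
        intro t ht
        dsimp only
        rw [ENNReal.ofReal_mul (le_of_lt ht)]

theorem main_lintegral (x : EuclideanSpace ℝ (Fin 3)) :
    ∫⁻ y : EuclideanSpace ℝ (Fin 3), ENNReal.ofReal (Real.exp (-‖x - y‖) / (4 * π * ‖x - y‖) *
      (Real.exp (-‖y‖) / ‖y‖)) = ENNReal.ofReal (Real.exp (-‖x‖) / 2) := by
  set r := ‖x‖ with hrdef
  have hr : 0 ≤ r := norm_nonneg x
  have hx' : ‖Φ (r, 0, 0)‖ = r := by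
    rw [norm_Φ]
    norm_num
    exact Real.sqrt_sq hr
  obtain ⟨e, he⟩ := exists_isometry (Φ (r,0,0)) x hx'
  have hmeasG : Measurable fun y : EuclideanSpace ℝ (Fin 3) =>
      ENNReal.ofReal (Real.exp (-‖x - y‖) / (4 * π * ‖x - y‖) *
        (Real.exp (-‖y‖) / ‖y‖)) := by fun_prop
  have hmeasG2 : Measurable fun y : EuclideanSpace ℝ (Fin 3) =>
      ENNReal.ofReal (Real.exp (-‖Φ (r,0,0) - y‖) / (4 * π * ‖Φ (r,0,0) - y‖) *
        (Real.exp (-‖y‖) / ‖y‖)) := by fun_prop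
  calc ∫⁻ y : EuclideanSpace ℝ (Fin 3), ENNReal.ofReal (Real.exp (-‖x - y‖) /
          (4 * π * ‖x - y‖) * (Real.exp (-‖y‖) / ‖y‖))
      = ∫⁻ y : EuclideanSpace ℝ (Fin 3), ENNReal.ofReal (Real.exp (-‖x - e y‖) /
          (4 * π * ‖x - e y‖) * (Real.exp (-‖e y‖) / ‖e y‖)) :=
        (e.measurePreserving.lintegral_comp hmeasG).symm
    _ = ∫⁻ y : EuclideanSpace ℝ (Fin 3), ENNReal.ofReal (Real.exp (-‖Φ (r,0,0) - y‖) /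
          (4 * π * ‖Φ (r,0,0) - y‖) * (Real.exp (-‖y‖) / ‖y‖)) := by
        apply lintegral_congr
        intro y
        rw [show x - e y = e (Φ (r,0,0) - y) by rw [map_sub, he], e.norm_map, e.norm_map]
    _ = ∫⁻ p : ℝ × ℝ × ℝ, ENNReal.ofReal (Real.exp (-‖Φ (r,0,0) - Φ p‖) /
          (4 * π * ‖Φ (r,0,0) - Φ p‖) * (Real.exp (-‖Φ p‖) / ‖Φ p‖)) :=
        (measurePreserving_Φ.lintegral_comp hmeasG2).symm
    _ = ∫⁻ p : ℝ × ℝ × ℝ, ENNReal.ofReal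
          (Real.exp (-Real.sqrt ((r - p.1)^2 + (p.2.1^2 + p.2.2^2))) /
            (4 * π * Real.sqrt ((r - p.1)^2 + (p.2.1^2 + p.2.2^2))) *
          (Real.exp (-Real.sqrt (p.1^2 + (p.2.1^2 + p.2.2^2))) /
            Real.sqrt (p.1^2 + (p.2.1^2 + p.2.2^2)))) := by
        apply lintegral_congr
        intro p
        have hq0 : Φ ((r:ℝ),(0:ℝ),(0:ℝ)) 0 = r := by simpa using Φ_apply (r,0,0) 0
        have hq1 : Φ ((r:ℝ),(0:ℝ),(0:ℝ)) 1 = 0 := by simpa using Φ_apply (r,0,0) 1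
        have hq2 : Φ ((r:ℝ),(0:ℝ),(0:ℝ)) 2 = 0 := by simpa using Φ_apply (r,0,0) 2
        rw [norm_sub_Φ, norm_Φ, hq0, hq1, hq2]
        have harg : (r - p.1)^2 + ((0 - p.2.1)^2 + (0 - p.2.2)^2) =
            (r - p.1)^2 + (p.2.1^2 + p.2.2^2) := by ring
        rw [harg]
    _ = ∫⁻ u : ℝ, ∫⁻ q : ℝ × ℝ, ENNReal.ofReal
          (Real.exp (-Real.sqrt ((r - u)^2 + (q.1^2 + q.2^2))) /
            (4 * π * Real.sqrt ((r - u)^2 + (q.1^2 + q.2^2))) *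
          (Real.exp (-Real.sqrt (u^2 + (q.1^2 + q.2^2))) /
            Real.sqrt (u^2 + (q.1^2 + q.2^2)))) := by
        rw [Measure.volume_eq_prod, lintegral_prod]
        fun_prop
    _ = ∫⁻ u : ℝ, ENNReal.ofReal (2 * π) * ∫⁻ t in Ioi (0:ℝ), ENNReal.ofReal (t *
          (Real.exp (-Real.sqrt ((r - u)^2 + t^2)) / (4 * π * Real.sqrt ((r - u)^2 + t^2)) *
          (Real.exp (-Real.sqrt (u^2 + t^2)) / Real.sqrt (u^2 + t^2)))) :=
        lintegral_congr fun u => plane_integral (r - u) u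
    _ = ∫⁻ u : ℝ, ENNReal.ofReal (2 * π) *
          ∫⁻ w in Ioi (|r - u| + |u|), ENNReal.ofReal (Real.exp (-w) / (4 * π * w)) := by
        apply lintegral_congr_ae
        filter_upwards [compl_mem_ae_iff.mpr Real.volume_singleton] with u hu
        have hu0 : u ≠ (0:ℝ) := by simpa using hu
        congr 1
        exact key_subst (r - u) u
          (add_pos_of_nonneg_of_pos (abs_nonneg _) (abs_pos.mpr hu0))
    _ = ENNReal.ofReal (2 * π) * ∫⁻ u : ℝ,
          ∫⁻ w in Ioi (|r - u| + |u|), ENNReal.ofReal (Real.exp (-w) / (4 * π * w)) :=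
        lintegral_const_mul' _ _ (by simp [ENNReal.mul_eq_top])
    _ = ENNReal.ofReal (2 * π) * ENNReal.ofReal (Real.exp (-r) / (4 * π)) := by
        rw [outer_integral r hr]
    _ = ENNReal.ofReal (Real.exp (-r) / 2) := by
        rw [← ENNReal.ofReal_mul (by positivity)]
        congr 1
        have hpi : π ≠ 0 := Real.pi_ne_zero
        field_simp
        ring

end HydrogenAux

end HydrogenAuxSection

/-- The hydrogen ground state `φ(x) = e^{-‖x‖}` satisfies the integral (Kalos) equation
`φ = -2 G_μ V φ` with `μ = 1`, `G₁(x-y) = e^{-‖x-y‖}/(4π‖x-y‖)` and `V(y) = -1/‖y‖`: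
for every `x ∈ ℝ³` the integral converges absolutely and
`2 ∫ (e^{-‖x-y‖}/(4π‖x-y‖)) (e^{-‖y‖}/‖y‖) dy = e^{-‖x‖}`. -/
theorem hydrogen_ground_state_integral_equation (x : EuclideanSpace ℝ (Fin 3)) :
    MeasureTheory.Integrable
        (fun y : EuclideanSpace ℝ (Fin 3) =>
          Real.exp (-‖x - y‖) / (4 * π * ‖x - y‖) * (Real.exp (-‖y‖) / ‖y‖)) ∧
      2 * ∫ y : EuclideanSpace ℝ (Fin 3),
          Real.exp (-‖x - y‖) / (4 * π * ‖x - y‖) * (Real.exp (-‖y‖) / ‖y‖) =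
        Real.exp (-‖x‖) := by
  have hnn : ∀ y : EuclideanSpace ℝ (Fin 3),
      0 ≤ Real.exp (-‖x - y‖) / (4 * π * ‖x - y‖) * (Real.exp (-‖y‖) / ‖y‖) := by
    intro y
    have := Real.pi_pos
    positivity
  have hmeas : Measurable (fun y : EuclideanSpace ℝ (Fin 3) =>
      Real.exp (-‖x - y‖) / (4 * π * ‖x - y‖) * (Real.exp (-‖y‖) / ‖y‖)) := by fun_prop
  have hlint := HydrogenAux.main_lintegral x
  constructor
  · refine ⟨hmeas.aestronglyMeasurable, ?_⟩
    rw [hasFiniteIntegral_iff_ofReal (Filter.Eventually.of_forall hnn), hlint]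
    exact ENNReal.ofReal_lt_top
  · rw [integral_eq_lintegral_of_nonneg_ae (Filter.Eventually.of_forall hnn)
      hmeas.aestronglyMeasurable, hlint, ENNReal.toReal_ofReal (by positivity)]
    ring
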